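/- Let n ≥ 2, let H ≤ Sym(n), and let T and T' be tables over H that induce the same homeomorphism of C_n. Then T and T' are related by a finite sequence of the following moves and their inverses: (expansion) replace a column (p_i; σ_i; q_i; τ_i) by the n columns (p_i‖σ_i(a); σ_i; q_i‖τ_i(a); τ_i) for a ∈ A_n; (push-down) replace all columns (p_i; σ_i; q_i; τ_i) simultaneously by (p_i; id; q_i; τ_iσ_i^{−1}); (push-up) replace all columns (p_i; σ_i; q_i; τ_i) simultaneously by (p_i; σ_iτ_i^{−1}; q_i; id). -/

import Mathlib

namespace Paper

/-- Concatenation of a finite word with an infinite word. -/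
def cat {n : ℕ} (w : List (Fin n)) (ζ : ℕ → Fin n) : ℕ → Fin n :=
  fun i => if h : i < w.length then w[i]'h else ζ (i - w.length)

/-- The finite word `w` is a prefix of the infinite word `ζ`. -/
def IsPref {n : ℕ} (w : List (Fin n)) (ζ : ℕ → Fin n) : Prop :=
  ∀ (i : ℕ) (h : i < w.length), w[i]'h = ζ i

/-- An indexed family of finite words is a complete prefix code: every infinite
word has exactly one member of the family as a prefix. -/
def IsCPC {n : ℕ} {ι : Type} (P : ι → List (Fin n)) : Prop :=
  ∀ ζ : ℕ → Fin n, ∃! i : ι, IsPref (P i) ζ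

/-- `f` is the map described by the table with domain code `P`, range code `Q` and
permutations `σ, τ`: it sends `pᵢ‖σᵢ(u)` to `qᵢ‖τᵢ(u)`. -/
def TableFun {n : ℕ} {ι : Type} (P Q : ι → List (Fin n))
    (σ τ : ι → Equiv.Perm (Fin n)) (f : (ℕ → Fin n) → (ℕ → Fin n)) : Prop :=
  ∀ (i : ι) (u : ℕ → Fin n),
    f (cat (P i) (fun j => σ i (u j))) = cat (Q i) (fun j => τ i (u j))

/-- A table over a subgroup `H ≤ Sym(n)`. -/
structure Table (n : ℕ) (H : Subgroup (Equiv.Perm (Fin n))) where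
  k : ℕ
  P : Fin k → List (Fin n)
  Q : Fin k → List (Fin n)
  σ : Fin k → Equiv.Perm (Fin n)
  τ : Fin k → Equiv.Perm (Fin n)
  σ_mem : ∀ i, σ i ∈ H
  τ_mem : ∀ i, τ i ∈ H
  hP : IsCPC P
  hQ : IsCPC Q

/-- The table `T` induces the map `f`. -/
def Induces {n : ℕ} {H : Subgroup (Equiv.Perm (Fin n))} (T : Table n H)
    (f : (ℕ → Fin n) → (ℕ → Fin n)) : Prop :=
  TableFun T.P T.Q T.σ T.τ f

/-- The symmetric Thompson group `V_n(H)`, as the set of homeomorphisms of the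
Cantor space `C_n = A_n^ℕ` induced by tables over `H`. -/
def Vset (n : ℕ) (H : Subgroup (Equiv.Perm (Fin n))) :
    Set ((ℕ → Fin n) ≃ₜ (ℕ → Fin n)) :=
  { f | ∃ T : Table n H, Induces T ⇑f }

/-- `T'` is obtained from `T` by expanding the `i`-th column: that column is
deleted and, for each letter `a ∈ A_n`, the column `(pᵢ‖σᵢ(a); σᵢ; qᵢ‖τᵢ(a); τᵢ)`
is inserted (tables being identified with their sets of columns, the bijection `e`
matches the columns of `T'` with those of the expanded table). -/
def ExpandAt {n : ℕ} {H : Subgroup (Equiv.Perm (Fin n))} (T : Table n H)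
    (i : Fin T.k) (T' : Table n H) : Prop :=
  ∃ e : Fin T'.k ≃ ({j : Fin T.k // j ≠ i} ⊕ Fin n),
    ∀ j : Fin T'.k,
      (∀ j' : {j : Fin T.k // j ≠ i}, e j = Sum.inl j' →
        T'.P j = T.P j'.1 ∧ T'.σ j = T.σ j'.1 ∧
        T'.Q j = T.Q j'.1 ∧ T'.τ j = T.τ j'.1) ∧
      (∀ a : Fin n, e j = Sum.inr a →
        T'.P j = T.P i ++ [T.σ i a] ∧ T'.σ j = T.σ i ∧
        T'.Q j = T.Q i ++ [T.τ i a] ∧ T'.τ j = T.τ i)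

/-- `T'` is obtained from `T` by pushing all permutations down: every column
`(pᵢ; σᵢ; qᵢ; τᵢ)` is replaced by `(pᵢ; id; qᵢ; τᵢσᵢ⁻¹)`. -/
def PushDown {n : ℕ} {H : Subgroup (Equiv.Perm (Fin n))} (T T' : Table n H) : Prop :=
  ∃ h : T'.k = T.k, ∀ j : Fin T'.k,
    T'.P j = T.P (Fin.cast h j) ∧ T'.σ j = 1 ∧
    T'.Q j = T.Q (Fin.cast h j) ∧
    T'.τ j = T.τ (Fin.cast h j) * (T.σ (Fin.cast h j))⁻¹

/-- `T'` is obtained from `T` by pushing all permutations up: every column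
`(pᵢ; σᵢ; qᵢ; τᵢ)` is replaced by `(pᵢ; σᵢτᵢ⁻¹; qᵢ; id)`. -/
def PushUp {n : ℕ} {H : Subgroup (Equiv.Perm (Fin n))} (T T' : Table n H) : Prop :=
  ∃ h : T'.k = T.k, ∀ j : Fin T'.k,
    T'.P j = T.P (Fin.cast h j) ∧
    T'.σ j = T.σ (Fin.cast h j) * (T.τ (Fin.cast h j))⁻¹ ∧
    T'.Q j = T.Q (Fin.cast h j) ∧ T'.τ j = 1

/-- A basic move on tables: an expansion, a push-down, or a push-up. -/
def Move {n : ℕ} {H : Subgroup (Equiv.Perm (Fin n))} (T T' : Table n H) : Prop :=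
  (∃ i : Fin T.k, ExpandAt T i T') ∨ PushDown T T' ∨ PushUp T T'

/-! ### Auxiliary lemmas -/

section Aux

variable {n : ℕ}

theorem cat_append (w v : List (Fin n)) (ζ : ℕ → Fin n) :
    cat (w ++ v) ζ = cat w (cat v ζ) := by
  funext i
  simp only [cat, List.length_append]
  split_ifs with h1 h2 h2 h3 <;> try omega
  · exact List.getElem_append_left h2
  · exact List.getElem_append_right (by omega)
  · congr 1; omega

theorem map_cat (g : Fin n → Fin n) (v : List (Fin n)) (ζ : ℕ → Fin n) :
    (fun i => g (cat v ζ i)) = cat (v.map g) (fun i => g (ζ i)) := by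
  funext i
  simp only [cat, List.length_map]
  rcases lt_or_ge i v.length with h | h
  · rw [dif_pos h, dif_pos h, List.getElem_map]
  · rw [dif_neg (by omega), dif_neg (by omega)]

theorem isPref_cat (w : List (Fin n)) (ζ : ℕ → Fin n) : IsPref w (cat w ζ) := by
  intro i h
  simp only [cat, dif_pos h]

theorem isPref_append_singleton (w : List (Fin n)) (a : Fin n) (ζ : ℕ → Fin n) :
    IsPref (w ++ [a]) ζ ↔ IsPref w ζ ∧ ζ w.length = a := by
  constructor
  · intro h
    refine ⟨fun i hi => ?_, ?_⟩
    · have := h i (by simp; omega)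
      rwa [List.getElem_append_left hi] at this
    · have := h w.length (by simp)
      rw [List.getElem_append_right (le_refl _)] at this
      simpa using this.symm
  · rintro ⟨h1, h2⟩ i hi
    simp only [List.length_append, List.length_singleton] at hi
    rcases lt_or_ge i w.length with h | h
    · rw [List.getElem_append_left h]; exact h1 i h
    · have : i = w.length := by omega
      subst this
      rw [List.getElem_append_right (le_refl _)]
      simpa using h2.symm

theorem isPref_of_append (w v : List (Fin n)) (ζ : ℕ → Fin n)
    (h : IsPref (w ++ v) ζ) : IsPref w ζ := by
  intro i hi
  have := h i (by simp; omega)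
  rwa [List.getElem_append_left hi] at this

theorem isPref_eq_of_le (w v : List (Fin n)) (ζ : ℕ → Fin n)
    (hw : IsPref w ζ) (hv : IsPref v ζ) (h : w.length ≤ v.length) :
    w = v.take w.length := by
  apply List.ext_getElem (by simp; omega)
  intro i h1 h2
  rw [List.getElem_take]
  rw [hw i h1, hv i (by omega)]

theorem isPref_eq_of_length_eq (w v : List (Fin n)) (ζ : ℕ → Fin n)
    (hw : IsPref w ζ) (hv : IsPref v ζ) (h : w.length = v.length) :
    w = v := by
  rw [isPref_eq_of_le w v ζ hw hv h.le, h, List.take_length]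

end Aux
section Good

variable {n : ℕ}

/-- `(q, τ)` is a valid output column for input word `w` under the map `f`. -/
def Good (f : (ℕ → Fin n) → (ℕ → Fin n)) (w q : List (Fin n))
    (τ : Equiv.Perm (Fin n)) : Prop :=
  ∀ u : ℕ → Fin n, f (cat w u) = cat q (fun j => τ (u j))

theorem good_unique (hn : 2 ≤ n) (f : (ℕ → Fin n) → (ℕ → Fin n))
    (w q q' : List (Fin n)) (τ τ' : Equiv.Perm (Fin n))
    (h : Good f w q τ) (h' : Good f w q' τ') : q = q' ∧ τ = τ' := by
  have key : ∀ u : ℕ → Fin n, cat q (fun j => τ (u j)) = cat q' (fun j => τ' (u j)) := by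
    intro u; rw [← h u, ← h' u]
  -- lengths are equal
  have hlen : ∀ (q q' : List (Fin n)) (τ τ' : Equiv.Perm (Fin n)),
      (∀ u : ℕ → Fin n, cat q (fun j => τ (u j)) = cat q' (fun j => τ' (u j))) →
      ¬ q.length < q'.length := by
    intro q q' τ τ' key hlt
    have h0 : (⟨0, by omega⟩ : Fin n) ≠ (⟨1, by omega⟩ : Fin n) := by simp
    have e1 := congrFun (key (fun _ => ⟨0, by omega⟩)) q.length
    have e2 := congrFun (key (fun _ => ⟨1, by omega⟩)) q.length
    simp only [cat, lt_irrefl, dif_neg (lt_irrefl q.length), Nat.sub_self,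
      dif_pos hlt] at e1 e2
    rw [dif_neg not_false] at e1 e2
    exact h0 (τ.injective (by rw [e1, e2]))
  have hle : q.length = q'.length := by
    rcases lt_trichotomy q.length q'.length with h1 | h1 | h1
    · exact absurd h1 (hlen q q' τ τ' key)
    · exact h1
    · exact absurd h1 (hlen q' q τ' τ (fun u => (key u).symm))
  constructor
  · apply List.ext_getElem hle
    intro i h1 h2
    have := congrFun (key (fun _ => ⟨0, by omega⟩)) i
    simp only [cat, dif_pos h1, dif_pos h2] at this
    exact this
  · apply Equiv.ext
    intro a
    have := congrFun (key (fun _ => a)) q.length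
    simp only [cat, dif_neg (lt_irrefl q.length), hle ▸ lt_irrefl q.length,
      Nat.sub_self] at this
    rw [dif_neg (by omega)] at this
    simpa using this

/-- Existence of a good output column, from a table with trivial σ's. -/
theorem good_exists {H : Subgroup (Equiv.Perm (Fin n))} (hn : 2 ≤ n)
    (T : Table n H) (f : (ℕ → Fin n) → (ℕ → Fin n)) (hf : Induces T f)
    (hσ : ∀ i, T.σ i = 1) (w : List (Fin n)) (hw : ∀ i, (T.P i).length ≤ w.length) :
    ∃ x : List (Fin n) × Equiv.Perm (Fin n), x.2 ∈ H ∧ Good f w x.1 x.2 := by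
  have npos : 0 < n := by omega
  obtain ⟨i, hi, -⟩ := T.hP (cat w (fun _ => ⟨0, npos⟩))
  have hpref : T.P i = w.take (T.P i).length :=
    isPref_eq_of_le _ _ _ hi (isPref_cat w _) (by simp [hw i])
  set v := w.drop (T.P i).length with hv
  have hwv : w = T.P i ++ v := by
    conv_lhs => rw [← List.take_append_drop (T.P i).length w]
    rw [← hpref]
  refine ⟨⟨T.Q i ++ v.map (T.τ i), T.τ i⟩, T.τ_mem i, fun u => ?_⟩
  have hind := hf i (cat v u)
  rw [hσ i] at hind
  simp only [Equiv.Perm.coe_one, id_eq] at hind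
  rw [hwv, cat_append, hind, cat_append, map_cat]

end Good
section PushDownAux

variable {n : ℕ} {H : Subgroup (Equiv.Perm (Fin n))}

/-- The push-down of a table: all σ's become trivial. -/
def pushDownTable (T : Table n H) : Table n H where
  k := T.k
  P := T.P
  Q := T.Q
  σ := fun _ => 1
  τ := fun i => T.τ i * (T.σ i)⁻¹
  σ_mem := fun _ => one_mem H
  τ_mem := fun i => mul_mem (T.τ_mem i) (inv_mem (T.σ_mem i))
  hP := T.hP
  hQ := T.hQ

theorem pushDown_pushDownTable (T : Table n H) : PushDown T (pushDownTable T) := by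
  refine ⟨rfl, fun j => ?_⟩
  simp [pushDownTable, Fin.cast_refl]
  exact ⟨rfl, rfl, rfl⟩

theorem induces_pushDownTable (T : Table n H) (f : (ℕ → Fin n) → (ℕ → Fin n))
    (hf : Induces T f) : Induces (pushDownTable T) f := by
  intro i u
  have := hf i (fun j => (T.σ i)⁻¹ (u j))
  simp only [Equiv.Perm.inv_def, Equiv.apply_symm_apply] at this
  simp only [pushDownTable, Equiv.Perm.coe_one, id_eq, this]
  rfl

end PushDownAux

section ExpandAux

theorem elim_congr_inl {α β γ : Type*} {s : α ⊕ β} {x : α} (f : α → γ) (g : β → γ)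
    (h : s = Sum.inl x) : Sum.elim f g s = f x := by subst h; rfl

theorem elim_congr_inr {α β γ : Type*} {s : α ⊕ β} {x : β} (f : α → γ) (g : β → γ)
    (h : s = Sum.inr x) : Sum.elim f g s = g x := by subst h; rfl

variable {n : ℕ} {H : Subgroup (Equiv.Perm (Fin n))}

theorem isCPC_expand {ι ι' : Type} (P : ι → List (Fin n)) (hP : IsCPC P)
    (i0 : ι) (σ0 : Equiv.Perm (Fin n)) (e : ι' ≃ ({j : ι // j ≠ i0} ⊕ Fin n)) :
    IsCPC (fun j => Sum.elim (fun j' : {j : ι // j ≠ i0} => P j'.1)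
      (fun a : Fin n => P i0 ++ [σ0 a]) (e j)) := by
  intro ζ
  obtain ⟨i, hi, huniq⟩ := hP ζ
  by_cases hii : i = i0
  · subst hii
    refine ⟨e.symm (Sum.inr (σ0⁻¹ (ζ (P i).length))), ?_, ?_⟩
    · simp only [Equiv.apply_symm_apply, Sum.elim_inr]
      rw [isPref_append_singleton]
      exact ⟨hi, by simp⟩
    · intro y hy
      rcases h : e y with j' | a
      · exfalso
        simp only [h, Sum.elim_inl] at hy
        exact j'.2 (huniq j'.1 hy)
      · simp only [h, Sum.elim_inr, isPref_append_singleton] at hy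
        have ha : a = σ0⁻¹ (ζ (P i).length) := by
          rw [hy.2]; simp
        apply e.injective
        rw [h, Equiv.apply_symm_apply, ha]
  · refine ⟨e.symm (Sum.inl ⟨i, hii⟩), ?_, ?_⟩
    · simp only [Equiv.apply_symm_apply, Sum.elim_inl]
      exact hi
    · intro y hy
      rcases h : e y with j' | a
      · simp only [h, Sum.elim_inl] at hy
        apply e.injective
        rw [h, Equiv.apply_symm_apply]
        exact congrArg _ (Subtype.ext (huniq j'.1 hy))
      · exfalso
        simp only [h, Sum.elim_inr] at hy
        have : IsPref (P i0) ζ := isPref_of_append _ _ _ hy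
        exact hii (huniq i0 this).symm

/-- The expansion of a table at a column. -/
noncomputable def expandTable (T : Table n H) (i0 : Fin T.k) : Table n H where
  k := Fintype.card ({j : Fin T.k // j ≠ i0} ⊕ Fin n)
  P := fun j => Sum.elim (fun j' : {j : Fin T.k // j ≠ i0} => T.P j'.1)
    (fun a : Fin n => T.P i0 ++ [T.σ i0 a]) ((Fintype.equivFin _).symm j)
  Q := fun j => Sum.elim (fun j' : {j : Fin T.k // j ≠ i0} => T.Q j'.1)
    (fun a : Fin n => T.Q i0 ++ [T.τ i0 a]) ((Fintype.equivFin _).symm j)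
  σ := fun j => Sum.elim (fun j' : {j : Fin T.k // j ≠ i0} => T.σ j'.1)
    (fun _ : Fin n => T.σ i0) ((Fintype.equivFin _).symm j)
  τ := fun j => Sum.elim (fun j' : {j : Fin T.k // j ≠ i0} => T.τ j'.1)
    (fun _ : Fin n => T.τ i0) ((Fintype.equivFin _).symm j)
  σ_mem := fun j => by
    show Sum.elim (fun j' : {j : Fin T.k // j ≠ i0} => T.σ j'.1)
      (fun _ : Fin n => T.σ i0) ((Fintype.equivFin _).symm j) ∈ H
    rcases h : (Fintype.equivFin ({j : Fin T.k // j ≠ i0} ⊕ Fin n)).symm j with j' | a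
    · exact T.σ_mem _
    · exact T.σ_mem i0
  τ_mem := fun j => by
    show Sum.elim (fun j' : {j : Fin T.k // j ≠ i0} => T.τ j'.1)
      (fun _ : Fin n => T.τ i0) ((Fintype.equivFin _).symm j) ∈ H
    rcases h : (Fintype.equivFin ({j : Fin T.k // j ≠ i0} ⊕ Fin n)).symm j with j' | a
    · exact T.τ_mem _
    · exact T.τ_mem i0
  hP := isCPC_expand T.P T.hP i0 (T.σ i0) (Fintype.equivFin _).symm
  hQ := isCPC_expand T.Q T.hQ i0 (T.τ i0) (Fintype.equivFin _).symm

theorem expandAt_expandTable (T : Table n H) (i0 : Fin T.k) :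
    ExpandAt T i0 (expandTable T i0) := by
  refine ⟨(Fintype.equivFin ({j : Fin T.k // j ≠ i0} ⊕ Fin n)).symm, fun j => ⟨?_, ?_⟩⟩
  · intro j' hj'
    exact ⟨elim_congr_inl _ _ hj', elim_congr_inl _ _ hj',
      elim_congr_inl _ _ hj', elim_congr_inl _ _ hj'⟩
  · intro a ha
    exact ⟨elim_congr_inr _ _ ha, elim_congr_inr _ _ ha,
      elim_congr_inr _ _ ha, elim_congr_inr _ _ ha⟩

theorem induces_expandTable (T : Table n H) (i0 : Fin T.k)
    (f : (ℕ → Fin n) → (ℕ → Fin n)) (hf : Induces T f) :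
    Induces (expandTable T i0) f := by
  intro j u
  rcases h : (Fintype.equivFin ({j : Fin T.k // j ≠ i0} ⊕ Fin n)).symm j with j' | a
  · have hP : (expandTable T i0).P j = T.P j'.1 := elim_congr_inl _ _ h
    have hQ : (expandTable T i0).Q j = T.Q j'.1 := elim_congr_inl _ _ h
    have hσ : (expandTable T i0).σ j = T.σ j'.1 := elim_congr_inl _ _ h
    have hτ : (expandTable T i0).τ j = T.τ j'.1 := elim_congr_inl _ _ h
    rw [hP, hQ, hσ, hτ]
    exact hf j'.1 u
  · have hP : (expandTable T i0).P j = T.P i0 ++ [T.σ i0 a] := elim_congr_inr _ _ h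
    have hQ : (expandTable T i0).Q j = T.Q i0 ++ [T.τ i0 a] := elim_congr_inr _ _ h
    have hσ : (expandTable T i0).σ j = T.σ i0 := elim_congr_inr _ _ h
    have hτ : (expandTable T i0).τ j = T.τ i0 := elim_congr_inr _ _ h
    rw [hP, hQ, hσ, hτ]
    have hcons : ∀ (g : Equiv.Perm (Fin n)) (b : Fin n),
        (fun i => g (cat [b] u i)) = cat [g b] (fun i => g (u i)) := by
      intro g b
      have := map_cat (g : Fin n → Fin n) [b] u
      simpa using this
    calc f (cat (T.P i0 ++ [T.σ i0 a]) fun j => T.σ i0 (u j))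
        = f (cat (T.P i0) (fun i => T.σ i0 (cat [a] u i))) := by
          rw [cat_append, hcons]
      _ = cat (T.Q i0) (fun i => T.τ i0 (cat [a] u i)) := hf i0 (cat [a] u)
      _ = cat (T.Q i0 ++ [T.τ i0 a]) (fun j => T.τ i0 (u j)) := by
          rw [cat_append, hcons]

end ExpandAux
section FullAux

variable {n : ℕ} {H : Subgroup (Equiv.Perm (Fin n))}

theorem cat_tail_of_isPref {q : List (Fin n)} {ζ : ℕ → Fin n} (h : IsPref q ζ) :
    cat q (fun i => ζ (q.length + i)) = ζ := by
  funext i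
  simp only [cat]
  split_ifs with h1
  · exact h i h1
  · congr 1; omega

/-- If the input code of a system of good columns is a CPC and `f` is bijective,
the output code is a CPC as well. -/
theorem isCPC_of_good {f : (ℕ → Fin n) → (ℕ → Fin n)} (hfb : Function.Bijective f)
    {ι : Type} (P Q : ι → List (Fin n)) (τ : ι → Equiv.Perm (Fin n))
    (hP : IsCPC P) (hgood : ∀ i, Good f (P i) (Q i) (τ i)) : IsCPC Q := by
  intro ζ
  obtain ⟨ξ, hξ⟩ := hfb.2 ζ
  obtain ⟨i, hi, huniq⟩ := hP ξ
  refine ⟨i, ?_, ?_⟩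
  · have h1 := hgood i (fun k => ξ ((P i).length + k))
    rw [cat_tail_of_isPref hi, hξ] at h1
    rw [h1]
    exact isPref_cat _ _
  · intro y hy
    have h1 := hgood y (fun k => (τ y)⁻¹ (ζ ((Q y).length + k)))
    have h2 : (fun j => τ y ((τ y)⁻¹ (ζ ((Q y).length + j)))) =
        (fun j => ζ ((Q y).length + j)) := by
      funext j; simp
    rw [h2, cat_tail_of_isPref hy, ← hξ] at h1
    have h3 := hfb.1 h1
    exact huniq y (h3 ▸ isPref_cat (P y) _)

/-- The family of all length-`N` words over `A_n`. -/
noncomputable def fullP (n N : ℕ) : Fin (n ^ N) → List (Fin n) :=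
  fun j => List.ofFn (fun i : Fin N => finFunctionFinEquiv.symm j i)

theorem length_fullP (N : ℕ) (j : Fin (n ^ N)) : (fullP n N j).length = N := by
  simp [fullP]

theorem isCPC_fullP (N : ℕ) : IsCPC (fullP n N) := by
  intro ζ
  refine ⟨finFunctionFinEquiv (fun i : Fin N => ζ i), ?_, ?_⟩
  · intro i hi
    simp only [fullP, List.length_ofFn] at hi ⊢
    rw [List.getElem_ofFn]
    simp
  · intro y hy
    have hfun : finFunctionFinEquiv.symm y = fun i : Fin N => ζ i.1 := by
      funext i
      have := hy i.1 (by simp [fullP, i.2])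
      simp only [fullP, List.getElem_ofFn] at this
      simpa using this
    have := congrArg finFunctionFinEquiv hfun
    simpa using this

theorem isPref_fullP {N : ℕ} {w : List (Fin n)} (hw : w.length = N) (ζ : ℕ → Fin n)
    (hpref : IsPref w ζ) (j : Fin (n ^ N)) (hj : IsPref (fullP n N j) ζ) :
    fullP n N j = w := by
  exact isPref_eq_of_length_eq _ _ ζ hj hpref (by rw [length_fullP, hw])

/-- The depth-`N` full table for `f`. -/
noncomputable def fullTable (N : ℕ) (f : (ℕ → Fin n) → (ℕ → Fin n))
    (hfb : Function.Bijective f)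
    (hex : ∀ w : List (Fin n), w.length = N →
      ∃ x : List (Fin n) × Equiv.Perm (Fin n), x.2 ∈ H ∧ Good f w x.1 x.2) :
    Table n H where
  k := n ^ N
  P := fullP n N
  Q := fun j => (Classical.choose (hex (fullP n N j) (length_fullP N j))).1
  σ := fun _ => 1
  τ := fun j => (Classical.choose (hex (fullP n N j) (length_fullP N j))).2
  σ_mem := fun _ => one_mem H
  τ_mem := fun j => (Classical.choose_spec (hex (fullP n N j) (length_fullP N j))).1
  hP := isCPC_fullP N
  hQ := isCPC_of_good hfb (fullP n N) _ _ (isCPC_fullP N)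
    (fun j => (Classical.choose_spec (hex (fullP n N j) (length_fullP N j))).2)

theorem fullTable_good (N : ℕ) (f : (ℕ → Fin n) → (ℕ → Fin n))
    (hfb : Function.Bijective f)
    (hex : ∀ w : List (Fin n), w.length = N →
      ∃ x : List (Fin n) × Equiv.Perm (Fin n), x.2 ∈ H ∧ Good f w x.1 x.2)
    (j : Fin (n ^ N)) :
    Good f ((fullTable N f hfb hex : Table n H).P j) ((fullTable N f hfb hex : Table n H).Q j)
      ((fullTable N f hfb hex : Table n H).τ j) :=
  (Classical.choose_spec (hex (fullP n N j) (length_fullP N j))).2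

end FullAux
section Reorder

variable {n : ℕ} {H : Subgroup (Equiv.Perm (Fin n))}

/-- Two tables with the same columns up to a bijection are related by an
expansion followed by an inverse expansion. -/
theorem reorder_reachable (T T'' : Table n H) (e : Fin T.k ≃ Fin T''.k)
    (hcols : ∀ j, T.P j = T''.P (e j) ∧ T.Q j = T''.Q (e j) ∧
      T.σ j = T''.σ (e j) ∧ T.τ j = T''.τ (e j)) (i0 : Fin T.k) :
    Relation.ReflTransGen (fun A B : Table n H => Move A B ∨ Move B A) T T'' := by
  set U := expandTable T i0 with hU
  have m1 : Move T U := Or.inl ⟨i0, expandAt_expandTable T i0⟩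
  have m2 : Move T'' U := by
    refine Or.inl ⟨e i0, ?_⟩
    set E0 : Fin U.k ≃ ({j : Fin T.k // j ≠ i0} ⊕ Fin n) := (Fintype.equivFin ({j : Fin T.k // j ≠ i0} ⊕ Fin n)).symm
    set esub : {j : Fin T.k // j ≠ i0} ≃ {j : Fin T''.k // j ≠ e i0} :=
      e.subtypeEquiv (fun a => (not_congr (Equiv.apply_eq_iff_eq e)).symm)
    refine ⟨E0.trans (Equiv.sumCongr esub (Equiv.refl (Fin n))), fun j => ⟨?_, ?_⟩⟩
    · intro y' hy'
      rcases h : E0 j with x | a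
      · have h2 : (E0.trans (Equiv.sumCongr esub (Equiv.refl (Fin n)))) j
            = Sum.inl (esub x) := by
          simp only [Equiv.trans_apply, Equiv.sumCongr_apply, h, Sum.map_inl]
        rw [h2] at hy'
        have hx : esub x = y' := Sum.inl.inj hy'
        have hval : e x.1 = y'.1 := by rw [← hx]; rfl
        have c1 : U.P j = T.P x.1 := elim_congr_inl _ _ h
        have c2 : U.σ j = T.σ x.1 := elim_congr_inl _ _ h
        have c3 : U.Q j = T.Q x.1 := elim_congr_inl _ _ h
        have c4 : U.τ j = T.τ x.1 := elim_congr_inl _ _ h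
        obtain ⟨d1, d2, d3, d4⟩ := hcols x.1
        exact ⟨c1.trans (d1.trans (by rw [hval])),
          c2.trans (d3.trans (by rw [hval])),
          c3.trans (d2.trans (by rw [hval])),
          c4.trans (d4.trans (by rw [hval]))⟩
      · exfalso
        have h2 : (E0.trans (Equiv.sumCongr esub (Equiv.refl (Fin n)))) j
            = Sum.inr a := by
          simp only [Equiv.trans_apply, Equiv.sumCongr_apply, h, Sum.map_inr, Equiv.refl_apply]
        rw [h2] at hy'
        exact Sum.inr_ne_inl hy'
    · intro a ha
      rcases h : E0 j with x | b
      · exfalso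
        have h2 : (E0.trans (Equiv.sumCongr esub (Equiv.refl (Fin n)))) j
            = Sum.inl (esub x) := by
          simp only [Equiv.trans_apply, Equiv.sumCongr_apply, h, Sum.map_inl]
        rw [h2] at ha
        exact Sum.inl_ne_inr ha
      · have h2 : (E0.trans (Equiv.sumCongr esub (Equiv.refl (Fin n)))) j
            = Sum.inr b := by
          simp only [Equiv.trans_apply, Equiv.sumCongr_apply, h, Sum.map_inr, Equiv.refl_apply]
        rw [h2] at ha
        have hb : b = a := Sum.inr.inj ha
        subst hb
        have c1 : U.P j = T.P i0 ++ [T.σ i0 b] := elim_congr_inr _ _ h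
        have c2 : U.σ j = T.σ i0 := elim_congr_inr _ _ h
        have c3 : U.Q j = T.Q i0 ++ [T.τ i0 b] := elim_congr_inr _ _ h
        have c4 : U.τ j = T.τ i0 := elim_congr_inr _ _ h
        obtain ⟨d1, d2, d3, d4⟩ := hcols i0
        exact ⟨c1.trans (by rw [d1, d3]), c2.trans d3, c3.trans (by rw [d2, d4]), c4.trans d4⟩
  exact Relation.ReflTransGen.trans (Relation.ReflTransGen.single (Or.inl m1))
    (Relation.ReflTransGen.single (Or.inr m2))

end Reorder
section Main

variable {n : ℕ} {H : Subgroup (Equiv.Perm (Fin n))}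

theorem good_of_induces {f : (ℕ → Fin n) → (ℕ → Fin n)} (T : Table n H)
    (hind : Induces T f) (hσ : ∀ i, T.σ i = 1) (j : Fin T.k) :
    Good f (T.P j) (T.Q j) (T.τ j) := by
  intro u
  have := hind j u
  rw [hσ j] at this
  simpa using this

theorem reach_full (hn : 2 ≤ n) {f : (ℕ → Fin n) → (ℕ → Fin n)}
    (hfb : Function.Bijective f) {N : ℕ}
    (hex : ∀ w : List (Fin n), w.length = N →
      ∃ x : List (Fin n) × Equiv.Perm (Fin n), x.2 ∈ H ∧ Good f w x.1 x.2) :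
    ∀ (m : ℕ) (T : Table n H), (∑ i, (n ^ (N - (T.P i).length) - 1)) = m →
    (∀ i, T.σ i = 1) → (∀ i, (T.P i).length ≤ N) → Induces T f →
    Relation.ReflTransGen (fun A B : Table n H => Move A B ∨ Move B A) T
      (fullTable N f hfb hex) := by
  have npos : 0 < n := by omega
  intro m
  induction m using Nat.strong_induction_on with
  | _ m ih =>
    intro T hm hσ hlen hind
    by_cases hall : ∀ i, (T.P i).length = N
    · -- base case: all words have length N; T is a reordering of the full table
      set F := (fullTable N f hfb hex : Table n H) with hF
      have hgetlt : ∀ (j : Fin T.k) (i : Fin N), (i : ℕ) < (T.P j).length := by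
        intro j i; rw [hall j]; exact i.2
      set g : Fin T.k → Fin (n ^ N) :=
        fun j => finFunctionFinEquiv (fun i : Fin N => (T.P j)[(i : ℕ)]'(hgetlt j i))
          with hg
      have hPfull : ∀ j, fullP n N (g j) = T.P j := by
        intro j
        apply List.ext_getElem (by rw [length_fullP, hall j])
        intro i h1 h2
        simp only [fullP, List.getElem_ofFn, hg, Equiv.symm_apply_apply]
      have hginj : Function.Injective g := by
        intro j j' hjj
        have hPP : T.P j = T.P j' := by
          rw [← hPfull j, ← hPfull j', hjj]
        obtain ⟨i, hi, hu⟩ := T.hP (cat (T.P j) (fun _ => ⟨0, npos⟩))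
        have e1 := hu j (isPref_cat _ _)
        have e2 := hu j' (by rw [hPP]; exact isPref_cat _ _)
        rw [e1, e2]
      have hgsurj : Function.Surjective g := by
        intro y
        obtain ⟨i, hi, -⟩ := T.hP (cat (fullP n N y) (fun _ => ⟨0, npos⟩))
        refine ⟨i, ?_⟩
        have hPi : T.P i = fullP n N y :=
          isPref_eq_of_length_eq _ _ _ hi (isPref_cat _ _) (by rw [hall, length_fullP])
        -- g i = y
        have hfun : (fun i' : Fin N => (T.P i)[(i' : ℕ)]'(hgetlt i i')) =
            finFunctionFinEquiv.symm y := by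
          funext i'
          have : (T.P i)[(i' : ℕ)]'(hgetlt i i') = (fullP n N y)[(i' : ℕ)]'(by
            rw [length_fullP]; exact i'.2) := by
            congr 1
          rw [this]
          simp only [fullP, List.getElem_ofFn]
        rw [hg]
        simp only [hfun, Equiv.apply_symm_apply]
      set gE : Fin T.k ≃ Fin (n ^ N) := Equiv.ofBijective g ⟨hginj, hgsurj⟩ with hgE
      have hcols : ∀ j, T.P j = F.P (gE j) ∧ T.Q j = F.Q (gE j) ∧
          T.σ j = F.σ (gE j) ∧ T.τ j = F.τ (gE j) := by
        intro j
        have hP : F.P (gE j) = T.P j := hPfull j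
        have good1 : Good f (T.P j) (T.Q j) (T.τ j) := good_of_induces T hind hσ j
        have good2 : Good f (T.P j) (F.Q (gE j)) (F.τ (gE j)) := by
          have := fullTable_good N f hfb hex (gE j)
          rwa [hP] at this
        obtain ⟨hq, ht⟩ := good_unique hn f _ _ _ _ _ good1 good2
        exact ⟨hP.symm, hq, (hσ j).trans rfl, ht⟩
      obtain ⟨i0, -, -⟩ := T.hP (fun _ => ⟨0, npos⟩)
      exact reorder_reachable T F gE hcols i0
    · -- inductive step: expand a short column
      push_neg at hall
      obtain ⟨i0, hi0⟩ := hall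
      have hlt : (T.P i0).length < N := lt_of_le_of_ne (hlen i0) hi0
      set T2 := expandTable T i0 with hT2
      set E0 : Fin T2.k ≃ ({j : Fin T.k // j ≠ i0} ⊕ Fin n) :=
        (Fintype.equivFin ({j : Fin T.k // j ≠ i0} ⊕ Fin n)).symm with hE0
      have hσ2 : ∀ j, T2.σ j = 1 := by
        intro j
        rcases h : E0 j with x | a
        · exact (elim_congr_inl _ _ h).trans (hσ x.1)
        · exact (elim_congr_inr _ _ h).trans (hσ i0)
      have hlen2 : ∀ j, (T2.P j).length ≤ N := by
        intro j
        rcases h : E0 j with x | a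
        · have hh : T2.P j = T.P x.1 := elim_congr_inl _ _ h
          rw [hh]; exact hlen x.1
        · have hh : T2.P j = T.P i0 ++ [T.σ i0 a] := elim_congr_inr _ _ h
          rw [hh]
          simp only [List.length_append, List.length_singleton]
          omega
      have hind2 : Induces T2 f := induces_expandTable T i0 f hind
      -- the measure decreases
      set c : Fin T.k → ℕ := fun i => n ^ (N - (T.P i).length) - 1 with hc
      set t := n ^ (N - ((T.P i0).length + 1)) with htdef
      have ht1 : 1 ≤ t := Nat.one_le_pow _ _ npos
      have hpow : n ^ (N - (T.P i0).length) = t * n := by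
        rw [htdef, ← pow_succ]
        congr 1
        omega
      have hsum2 : (∑ j, (n ^ (N - (T2.P j).length) - 1)) =
          (∑ x : {j : Fin T.k // j ≠ i0}, c x.1) + n * (t - 1) := by
        rw [Fintype.sum_equiv E0
          (fun j => n ^ (N - (T2.P j).length) - 1)
          (Sum.elim (fun x : {j : Fin T.k // j ≠ i0} => c x.1) (fun _ : Fin n => t - 1))]
        · rw [Fintype.sum_sum_type]
          simp [mul_comm]
        · intro j
          rcases h : E0 j with x | a
          · have hh : T2.P j = T.P x.1 := elim_congr_inl _ _ h
            rw [hh]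
            rfl
          · have hh : T2.P j = T.P i0 ++ [T.σ i0 a] := elim_congr_inr _ _ h
            rw [hh]
            simp only [Sum.elim_inr, List.length_append, List.length_singleton]
            rfl
      have hsum1 : m = (∑ x : {j : Fin T.k // j ≠ i0}, c x.1) + (t * n - 1) := by
        rw [← hm, ← Finset.add_sum_erase Finset.univ c (Finset.mem_univ i0)]
        rw [Finset.sum_subtype (Finset.univ.erase i0)
          (p := fun j => j ≠ i0) (by simp) c]
        rw [hc]
        simp only [hpow]
        ring
      have hdec : (∑ j, (n ^ (N - (T2.P j).length) - 1)) < m := by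
        rw [hsum2, hsum1]
        have h2 : n * (t - 1) + n = n * t := by
          obtain ⟨u, hu⟩ := Nat.exists_eq_add_of_le ht1
          have hu1 : t - 1 = u := by omega
          rw [hu1, hu, Nat.mul_add, Nat.mul_one]
          omega
        have h3 : n * t = t * n := mul_comm n t
        omega
      have hchain := ih _ hdec T2 rfl hσ2 hlen2 hind2
      exact Relation.ReflTransGen.head
        (Or.inl (Or.inl ⟨i0, expandAt_expandTable T i0⟩)) hchain

end Main
/-- Two tables over `H` inducing the same homeomorphism of `C_n`
are related by a finite sequence of the basic moves (expansion, push-down,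
push-up) and their inverses. -/
theorem stmt16 (n : ℕ) (hn : 2 ≤ n) (H : Subgroup (Equiv.Perm (Fin n)))
    (T T' : Table n H) (f : (ℕ → Fin n) ≃ₜ (ℕ → Fin n))
    (hT : Induces T ⇑f) (hT' : Induces T' ⇑f) :
    Relation.ReflTransGen (fun A B : Table n H => Move A B ∨ Move B A) T T' := by
  classical
  have hfb : Function.Bijective ⇑f := f.toEquiv.bijective
  set N := max (Finset.univ.sup fun i => (T.P i).length)
    (Finset.univ.sup fun i => (T'.P i).length) with hN
  have hlenT : ∀ i, (T.P i).length ≤ N := by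
    intro i
    rw [hN]
    exact le_trans (Finset.le_sup (f := fun i => (T.P i).length) (Finset.mem_univ i))
      (le_max_left _ _)
  have hlenT' : ∀ i, (T'.P i).length ≤ N := by
    intro i
    rw [hN]
    exact le_trans (Finset.le_sup (f := fun i => (T'.P i).length) (Finset.mem_univ i))
      (le_max_right _ _)
  have hT1ind : Induces (pushDownTable T) ⇑f := induces_pushDownTable T _ hT
  have hT1ind' : Induces (pushDownTable T') ⇑f := induces_pushDownTable T' _ hT'
  have hex : ∀ w : List (Fin n), w.length = N →
      ∃ x : List (Fin n) × Equiv.Perm (Fin n), x.2 ∈ H ∧ Good (⇑f) w x.1 x.2 :=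
    fun w hw => good_exists hn (pushDownTable T) ⇑f hT1ind (fun _ => rfl) w
      (fun i => by rw [hw]; exact hlenT i)
  have c1 := reach_full hn hfb hex _ (pushDownTable T) rfl (fun _ => rfl)
    (fun i => hlenT i) hT1ind
  have c2 := reach_full hn hfb hex _ (pushDownTable T') rfl (fun _ => rfl)
    (fun i => hlenT' i) hT1ind'
  have s1 : Move T (pushDownTable T) := Or.inr (Or.inl (pushDown_pushDownTable T))
  have s2 : Move T' (pushDownTable T') := Or.inr (Or.inl (pushDown_pushDownTable T'))
  have d1 : Relation.ReflTransGen (fun A B : Table n H => Move A B ∨ Move B A) T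
      (fullTable N (⇑f) hfb hex) := Relation.ReflTransGen.head (Or.inl s1) c1
  have d2 : Relation.ReflTransGen (fun A B : Table n H => Move A B ∨ Move B A) T'
      (fullTable N (⇑f) hfb hex) := Relation.ReflTransGen.head (Or.inl s2) c2
  have hsym : Symmetric (fun A B : Table n H => Move A B ∨ Move B A) :=
    fun a b h => h.symm
  exact d1.trans ((@Relation.ReflTransGen.symmetric _ _ ⟨fun a b h => hsym h⟩).symm _ _ d2)

end Paper
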